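/- Let G and H be r-uniform hypergraphs such that: (i) G has s vertices, H has n vertices, and s divides n; (ii) G has m edges and each edge of G intersects at most d other edges of G; (iii) each vertex of H has degree at least (1−x)·C(n−1, r−1) for some number x. If x < 1/(e·(d + 1 + r²·m/s)), where e is Euler's number, then H has a perfect G-packing. -/

import Mathlib

open Finset

/-- `H` (an `r`-uniform hypergraph with vertex type `β` and edge set `E_H`) has a perfect
`G`-packing (`G` with vertex type `α` and edge set `E_G`): there are vertex-disjoint
subhypergraphs of `H`, each isomorphic to `G` (given by injections `g t : α ↪ β` whose
images partition the vertex set of `H` and which carry every edge of `G` to an edge of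
`H`). -/
def HasPerfectPacking {α β : Type*} [DecidableEq β]
    (E_G : Finset (Finset α)) (E_H : Finset (Finset β)) : Prop :=
  ∃ (k : ℕ) (g : Fin k → (α ↪ β)),
    (∀ t t', t ≠ t' → ∀ a a', g t a ≠ g t' a') ∧
    (∀ b : β, ∃ t a, g t a = b) ∧
    (∀ t, ∀ F ∈ E_G, F.map (g t) ∈ E_H)

set_option linter.unusedSectionVars false
set_option linter.unusedVariables false


section LLL
variable {Ω : Type*} [Fintype Ω] [DecidableEq Ω] {I : Type*} [Fintype I] [DecidableEq I]

/-- The set of outcomes avoiding all events `A j`, `j ∈ S`. -/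
def avoidSet (A : I → Finset Ω) (S : Finset I) : Finset Ω :=
  univ.filter fun ω => ∀ j ∈ S, ω ∉ A j

variable {A : I → Finset Ω}

lemma avoidSet_empty : avoidSet A ∅ = univ := by simp [avoidSet]

lemma avoidSet_insert (j : I) (S : Finset I) :
    avoidSet A (insert j S) = avoidSet A S \ A j := by
  ext ω; simp [avoidSet]; tauto

lemma avoidSet_mono {S T : Finset I} (h : S ⊆ T) : avoidSet A T ⊆ avoidSet A S := by
  intro ω hω
  simp only [avoidSet, mem_filter, mem_univ, true_and] at hω ⊢
  exact fun j hj => hω j (h hj)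

lemma card_avoidSet_insert (j : I) (S : Finset I) :
    ((avoidSet A (insert j S)).card : ℝ)
      = (avoidSet A S).card - (avoidSet A S ∩ A j).card := by
  rw [avoidSet_insert]
  have := Finset.card_inter_add_card_sdiff (avoidSet A S) (A j)
  push_cast [← this]
  ring

lemma avoidSet_inter_self (j : I) (S : Finset I) (hj : j ∈ S) :
    avoidSet A S ∩ A j = ∅ := by
  ext ω
  simp only [mem_inter, avoidSet, mem_filter, mem_univ, true_and, notMem_empty, iff_false,
    not_and]
  exact fun h => h j hj

/-- Symmetric lopsided local lemma, counting form. -/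
theorem lll_nonempty [Nonempty Ω] (A : I → Finset Ω) (Γ : I → Finset I)
    (hself : ∀ i, i ∈ Γ i) (Δ : ℕ) (hΔ : ∀ i, (Γ i).card ≤ Δ) (p : ℝ) (hp0 : 0 ≤ p)
    (hp : ∀ (i : I) (S : Finset I), (∀ j ∈ S, j ∉ Γ i) →
      ((avoidSet A S ∩ A i).card : ℝ) ≤ p * (avoidSet A S).card)
    (hep : Real.exp 1 * (p * Δ) ≤ 1) :
    (avoidSet A univ).Nonempty := by
  have hcard0 : (0:ℝ) < ((univ : Finset Ω)).card := by
    have := Fintype.card_pos (α := Ω)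
    exact_mod_cast this
  rcases isEmpty_or_nonempty I with hI | hI
  · refine card_pos.mp ?_
    have : avoidSet A (univ : Finset I) = univ := by
      ext ω; simp [avoidSet]
    rw [this]; exact Fintype.card_pos
  -- Δ ≥ 1
  have hΔ1 : 1 ≤ Δ := by
    obtain ⟨i⟩ := hI
    exact le_trans (card_pos.mpr ⟨i, hself i⟩) (hΔ i)
  have he1 : (1:ℝ) ≤ Real.exp 1 := by
    have := Real.add_one_le_exp 1; linarith [this]
  have hΔpos : (0:ℝ) < Δ := by exact_mod_cast hΔ1
  rcases eq_or_lt_of_le hΔ1 with hΔeq | hΔ2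
  · -- Δ = 1 : all events mutually "independent"
    have hΓ : ∀ i, Γ i = {i} := by
      intro i
      apply Finset.eq_singleton_iff_unique_mem.mpr
      refine ⟨hself i, fun y hy => ?_⟩
      by_contra hne
      have h2 : ({y, i} : Finset I) ⊆ Γ i := by
        intro z hz; rcases mem_insert.mp hz with rfl | hz
        · exact hy
        · rw [mem_singleton.mp hz]; exact hself i
      have h3 := Finset.card_le_card h2
      rw [Finset.card_insert_of_notMem (by simpa using hne)] at h3
      simp only [Finset.card_singleton] at h3
      have h4 := hΔ i
      omega
    have he2 : (2:ℝ) < Real.exp 1 := lt_trans (by norm_num) Real.exp_one_gt_d9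
    have hplt1 : p < 1 := by
      rw [← hΔeq] at hep; push_cast at hep
      nlinarith
    have key : ∀ S : Finset I, (0:ℝ) < (avoidSet A S).card := by
      intro S
      induction S using Finset.induction_on with
      | empty => rw [avoidSet_empty]; exact hcard0
      | @insert j S hj ih =>
        rw [card_avoidSet_insert]
        have hS : ∀ j' ∈ S, j' ∉ Γ j := by
          intro j' hj' hmem
          rw [hΓ j, mem_singleton] at hmem
          exact hj (hmem ▸ hj')
        have := hp j S hS
        nlinarith
    have := key univ
    refine card_pos.mp ?_; exact_mod_cast this
  · -- main case Δ ≥ 2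
    set x : ℝ := (Δ : ℝ)⁻¹ with hxdef
    have hx0 : 0 < x := by positivity
    have hx1 : x < 1 := by
      rw [hxdef, inv_lt_one_iff₀]; right; exact_mod_cast hΔ2
    have hpe : p ≤ 1 / (Real.exp 1 * Δ) := by
      rw [le_div_iff₀ (by positivity)]
      nlinarith
    -- key analytic inequality : x * (1-x)^(Δ-1) ≥ 1/(e Δ)
    have hkey : 1 / (Real.exp 1 * Δ) ≤ x * (1 - x) ^ (Δ - 1) := by
      have ht : (1:ℝ) ≤ (Δ:ℝ) - 1 := by
        have : (2:ℕ) ≤ Δ := hΔ2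
        have : (2:ℝ) ≤ (Δ:ℝ) := by exact_mod_cast this
        linarith
      set t : ℝ := (Δ:ℝ) - 1 with htd
      have htpos : 0 < t := by linarith
      have h1 : (t+1)/t ≤ Real.exp (1/t) := by
        have := Real.add_one_le_exp (1/t)
        have h2 : (t+1)/t = 1/t + 1 := by field_simp; ring
        linarith [this, h2.le]
      have h2 : ((t+1)/t) ^ (Δ-1) ≤ Real.exp (1/t) ^ (Δ-1) := by
        apply pow_le_pow_left₀ (by positivity) h1
      have h3 : Real.exp (1/t) ^ (Δ-1) = Real.exp 1 := by
        rw [← Real.exp_nat_mul]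
        congr 1
        have : ((Δ - 1 : ℕ) : ℝ) = t := by
          rw [htd]; push_cast [Nat.cast_sub hΔ1]; ring
        rw [this]; field_simp
      have h4 : ((t+1)/t) ^ (Δ-1) ≤ Real.exp 1 := h3 ▸ h2
      have h5 : 1 - x = t / (t+1) := by
        rw [hxdef, htd]; field_simp
        rw [sub_add_cancel, mul_div_cancel_left₀ _ hΔpos.ne']
      have h6 : (1-x) ^ (Δ-1) = (((t+1)/t) ^ (Δ-1))⁻¹ := by
        rw [h5, ← inv_pow]
        congr 1
        rw [inv_div]
      have hppos : (0:ℝ) < ((t+1)/t) ^ (Δ-1) := by positivity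
      have h7 : (Real.exp 1)⁻¹ ≤ (1-x)^(Δ-1) := by
        rw [h6]
        exact inv_anti₀ (by positivity) h4
      have h8 : x * (Real.exp 1)⁻¹ ≤ x * (1-x)^(Δ-1) := by
        exact mul_le_mul_of_nonneg_left h7 hx0.le
      calc 1 / (Real.exp 1 * Δ) = x * (Real.exp 1)⁻¹ := by
            rw [hxdef]; field_simp
        _ ≤ _ := h8
    have hpx : p ≤ x * (1-x)^(Δ-1) := le_trans hpe hkey
    have hpxx : p ≤ x := by
      have : (1-x)^(Δ-1) ≤ 1 := pow_le_one₀ (by linarith) (by linarith)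
      nlinarith
    -- main claim by strong induction
    have claim : ∀ k : ℕ, ∀ S : Finset I, S.card ≤ k → ∀ i : I,
        ((avoidSet A S ∩ A i).card : ℝ) ≤ x * (avoidSet A S).card := by
      intro k
      induction k with
      | zero =>
        intro S hS i
        rw [Finset.card_eq_zero.mp (Nat.le_zero.mp hS)]
        calc ((avoidSet A (∅ : Finset I) ∩ A i).card : ℝ)
            ≤ p * (avoidSet A ∅).card := hp i ∅ (by simp)
          _ ≤ x * (avoidSet A ∅).card := by
              apply mul_le_mul_of_nonneg_right hpxx (by positivity)
      | succ k ih =>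
        intro S hS i
        by_cases hiS : i ∈ S
        · rw [avoidSet_inter_self i S hiS]
          simp only [card_empty, Nat.cast_zero]
          positivity
        set S₁ : Finset I := S.filter (· ∈ Γ i) with hS₁
        set S₂ : Finset I := S.filter (¬ · ∈ Γ i) with hS₂
        have hsplit : S₂ ∪ S₁ = S := by
          rw [hS₁, hS₂, Finset.union_comm]
          exact Finset.filter_union_filter_not_eq _ S
        -- peeling
        have peel : ∀ T ⊆ S₁, (1-x) ^ T.card * ((avoidSet A S₂).card : ℝ)
            ≤ ((avoidSet A (S₂ ∪ T)).card : ℝ) := by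
          intro T
          induction T using Finset.induction_on with
          | empty => intro _; simp
          | @insert j T hjT ihT =>
            intro hins
            have hTsub : T ⊆ S₁ := fun z hz => hins (mem_insert_of_mem hz)
            have hjS₁ : j ∈ S₁ := hins (mem_insert_self _ _)
            have hjS : j ∈ S := (mem_filter.mp hjS₁).1
            have hjΓ : j ∈ Γ i := (mem_filter.mp hjS₁).2
            have hUk : (S₂ ∪ T).card ≤ k := by
              have hsub : S₂ ∪ T ⊆ S.erase j := by
                intro z hz
                rcases mem_union.mp hz with hz | hz
                · refine mem_erase.mpr ⟨?_, (mem_filter.mp hz).1⟩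
                  rintro rfl
                  exact (mem_filter.mp hz).2 hjΓ
                · refine mem_erase.mpr ⟨?_, (mem_filter.mp (hTsub hz)).1⟩
                  rintro rfl; exact hjT hz
              calc (S₂ ∪ T).card ≤ (S.erase j).card := Finset.card_le_card hsub
                _ = S.card - 1 := Finset.card_erase_of_mem hjS
                _ ≤ k := by omega
            have hstep := ih (S₂ ∪ T) hUk j
            have hins' : S₂ ∪ insert j T = insert j (S₂ ∪ T) := by
              rw [Finset.union_insert]
            rw [hins', card_avoidSet_insert]
            have h1x : (0:ℝ) ≤ 1 - x := by linarith
            calc (1-x) ^ (insert j T).card * ((avoidSet A S₂).card : ℝ)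
                = (1-x) * ((1-x) ^ T.card * (avoidSet A S₂).card) := by
                  rw [Finset.card_insert_of_notMem hjT]; ring
              _ ≤ (1-x) * ((avoidSet A (S₂ ∪ T)).card : ℝ) := by
                  apply mul_le_mul_of_nonneg_left (ihT hTsub) h1x
              _ ≤ ((avoidSet A (S₂ ∪ T)).card : ℝ) - ((avoidSet A (S₂ ∪ T) ∩ A j).card : ℝ) := by
                  nlinarith
        have hpeel := peel S₁ (le_refl _)
        rw [hsplit] at hpeel
        have hS₁card : S₁.card ≤ Δ - 1 := by
          have hsub : S₁ ⊆ (Γ i).erase i := by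
            intro z hz
            refine mem_erase.mpr ⟨?_, (mem_filter.mp hz).2⟩
            rintro rfl; exact hiS (mem_filter.mp hz).1
          calc S₁.card ≤ ((Γ i).erase i).card := Finset.card_le_card hsub
            _ = (Γ i).card - 1 := Finset.card_erase_of_mem (hself i)
            _ ≤ Δ - 1 := by have := hΔ i; omega
        have h1x0 : (0:ℝ) < 1 - x := by linarith
        have hmono : (1-x)^(Δ-1) ≤ (1-x)^S₁.card :=
          pow_le_pow_of_le_one h1x0.le (by linarith) hS₁card
        have hsub2 : avoidSet A S ⊆ avoidSet A S₂ :=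
          avoidSet_mono (fun z hz => (mem_filter.mp hz).1)
        have hmono2 : ((avoidSet A S ∩ A i).card : ℝ) ≤ ((avoidSet A S₂ ∩ A i).card : ℝ) := by
          exact_mod_cast Finset.card_le_card (Finset.inter_subset_inter_right hsub2)
        have hhp : ((avoidSet A S₂ ∩ A i).card : ℝ) ≤ p * (avoidSet A S₂).card := by
          apply hp
          intro j hj
          exact (mem_filter.mp hj).2
        -- combine
        have hc2 : (0:ℝ) ≤ ((avoidSet A S₂).card : ℝ) := by positivity
        have step1 : ((avoidSet A S ∩ A i).card : ℝ) ≤ p * (avoidSet A S₂).card :=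
          le_trans hmono2 hhp
        have step2 : p * ((avoidSet A S₂).card : ℝ) ≤ x * ((1-x)^S₁.card * (avoidSet A S₂).card) := by
          have : p ≤ x * (1-x)^S₁.card := by
            calc p ≤ x * (1-x)^(Δ-1) := hpx
              _ ≤ x * (1-x)^S₁.card := by
                  apply mul_le_mul_of_nonneg_left hmono hx0.le
          nlinarith
        have step3 : x * ((1-x)^S₁.card * ((avoidSet A S₂).card:ℝ)) ≤ x * (avoidSet A S).card := by
          apply mul_le_mul_of_nonneg_left hpeel hx0.le
        linarith
    -- positivity of all avoid sets
    have pos : ∀ S : Finset I, (0:ℝ) < ((avoidSet A S).card : ℝ) := by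
      intro S
      induction S using Finset.induction_on with
      | empty => rw [avoidSet_empty]; exact hcard0
      | @insert j S hj ih =>
        rw [card_avoidSet_insert]
        have := claim S.card S (le_refl _) j
        nlinarith
    have := pos univ
    refine card_pos.mp ?_; exact_mod_cast this

end LLL


section Twist
variable {V β : Type*} [Fintype V] [Fintype β] [DecidableEq V] [DecidableEq β]

/-- Swap two disjoint finsets via a given bijection, fixing everything else. -/
def swapFun (s t : Finset V) (e : {x // x ∈ s} ≃ {x // x ∈ t}) (x : V) : V :=
  if hx : x ∈ s then (e ⟨x, hx⟩ : V)
  else if hx' : x ∈ t then (e.symm ⟨x, hx'⟩ : V)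
  else x

lemma swapFun_involutive (s t : Finset V) (h : Disjoint s t)
    (e : {x // x ∈ s} ≃ {x // x ∈ t}) : Function.Involutive (swapFun s t e) := by
  intro x
  unfold swapFun
  by_cases hx : x ∈ s
  · rw [dif_pos hx]
    have ht : ((e ⟨x, hx⟩ : {x // x ∈ t}) : V) ∈ t := (e ⟨x, hx⟩).2
    have hs : ((e ⟨x, hx⟩ : {x // x ∈ t}) : V) ∉ s := fun hmem =>
      (Finset.disjoint_left.mp h hmem) ht
    rw [dif_neg hs, dif_pos ht]
    simp
  · rw [dif_neg hx]
    by_cases hx' : x ∈ t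
    · rw [dif_pos hx']
      have hs : ((e.symm ⟨x, hx'⟩ : {x // x ∈ s}) : V) ∈ s := (e.symm ⟨x, hx'⟩).2
      rw [dif_pos hs]
      simp
    · rw [dif_neg hx', dif_neg hx, dif_neg hx']

/-- The swap permutation. -/
noncomputable def swapPerm (s t : Finset V) (h : Disjoint s t) (hc : s.card = t.card) :
    Equiv.Perm V :=
  Function.Involutive.toPerm _ (swapFun_involutive s t h (Finset.equivOfCardEq hc))

lemma swapPerm_apply_of_not_mem {s t : Finset V} (h : Disjoint s t) (hc : s.card = t.card)
    {x : V} (hxs : x ∉ s) (hxt : x ∉ t) : swapPerm s t h hc x = x := by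
  simp only [swapPerm, Function.Involutive.coe_toPerm, swapFun, dif_neg hxs, dif_neg hxt]

lemma swapPerm_mem_of_mem_left {s t : Finset V} (h : Disjoint s t) (hc : s.card = t.card)
    {x : V} (hxs : x ∈ s) : swapPerm s t h hc x ∈ t := by
  simp only [swapPerm, Function.Involutive.coe_toPerm, swapFun, dif_pos hxs]
  exact Subtype.coe_prop _

lemma swapPerm_mem_of_mem_right {s t : Finset V} (h : Disjoint s t) (hc : s.card = t.card)
    {x : V} (hxt : x ∈ t) : swapPerm s t h hc x ∈ s := by
  have hxs : x ∉ s := fun hmem => (Finset.disjoint_left.mp h hmem) hxt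
  simp only [swapPerm, Function.Involutive.coe_toPerm, swapFun, dif_neg hxs, dif_pos hxt]
  exact Subtype.coe_prop _

lemma swapPerm_symm {s t : Finset V} (h : Disjoint s t) (hc : s.card = t.card) :
    (swapPerm s t h hc).symm = swapPerm s t h hc := by
  ext x
  rw [Equiv.symm_apply_eq]
  exact ((swapFun_involutive s t h (Finset.equivOfCardEq hc)) x).symm

/-- Image of a set `P` under the swap of `P \ Q` and `Q \ P` is `Q`. -/
lemma swapPerm_image (P Q : Finset V) (hc : (P \ Q).card = (Q \ P).card) :
    P.image (swapPerm (P \ Q) (Q \ P) disjoint_sdiff_sdiff hc) = Q := by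
  have hPQ : P.card = Q.card := by
    have h1 := Finset.card_inter_add_card_sdiff P Q
    have h2 := Finset.card_inter_add_card_sdiff Q P
    rw [Finset.inter_comm] at h2
    omega
  apply Finset.eq_of_subset_of_card_le
  · intro y hy
    rw [Finset.mem_image] at hy
    obtain ⟨z, hz, rfl⟩ := hy
    by_cases hzQ : z ∈ Q
    · rw [swapPerm_apply_of_not_mem _ _ (by simp [hzQ]) (by simp [hz])]
      exact hzQ
    · have : z ∈ P \ Q := Finset.mem_sdiff.mpr ⟨hz, hzQ⟩
      have := swapPerm_mem_of_mem_left disjoint_sdiff_sdiff hc this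
      exact (Finset.mem_sdiff.mp this).1
  · rw [Finset.card_image_of_injective _ (Equiv.injective _), hPQ]

/-- The twist of a bijection `σ` at a position set `P` toward a target image `M`:
a new bijection sending `P` onto `M` and agreeing with `σ` away from `P` and `σ⁻¹ M`. -/
noncomputable def twist (P : Finset V) (M : Finset β) (σ : V ≃ β) : V ≃ β :=
  if h : (P \ M.image σ.symm).card = ((M.image σ.symm) \ P).card then
    (swapPerm (P \ M.image σ.symm) ((M.image σ.symm) \ P) disjoint_sdiff_sdiff h).trans σ
  else σ

variable {P : Finset V} {M N : Finset β} {σ : V ≃ β}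

lemma mem_preim_iff {v : V} : v ∈ M.image σ.symm ↔ σ v ∈ M := by
  simp only [Finset.mem_image]
  constructor
  · rintro ⟨b, hb, rfl⟩; simpa using hb
  · intro h; exact ⟨σ v, h, by simp⟩

lemma card_preim : (M.image σ.symm).card = M.card :=
  Finset.card_image_of_injective _ (Equiv.injective _)

lemma twist_cardcond (hPM : P.card = M.card) :
    (P \ M.image σ.symm).card = ((M.image σ.symm) \ P).card := by
  have h1 := Finset.card_inter_add_card_sdiff P (M.image σ.symm)
  have h2 := Finset.card_inter_add_card_sdiff (M.image σ.symm) P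
  rw [Finset.inter_comm] at h2
  have := @card_preim V β _ _ _ _ M σ
  omega

lemma twist_apply (hPM : P.card = M.card) (x : V) :
    twist P M σ x
      = σ (swapPerm (P \ M.image σ.symm) ((M.image σ.symm) \ P) disjoint_sdiff_sdiff
          (twist_cardcond hPM) x) := by
  rw [twist, dif_pos (twist_cardcond hPM)]
  rfl

/-- The twist sends `P` onto `M`. -/
lemma twist_image (hPM : P.card = M.card) : P.image (twist P M σ) = M := by
  have h1 : P.image (twist P M σ)
      = (P.image (swapPerm (P \ M.image σ.symm) ((M.image σ.symm) \ P) disjoint_sdiff_sdiff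
          (twist_cardcond hPM))).image σ := by
    rw [Finset.image_image]
    apply Finset.image_congr
    intro x hx
    exact twist_apply hPM x
  rw [h1, swapPerm_image P (M.image σ.symm) (twist_cardcond hPM), Finset.image_image]
  have : ⇑σ ∘ ⇑σ.symm = id := by ext b; simp
  rw [this, Finset.image_id]

/-- Away from `P ∪ σ⁻¹ M`, the twist agrees with `σ`. -/
lemma twist_apply_of_not_mem (hPM : P.card = M.card) {x : V}
    (hx : x ∉ P) (hx' : σ x ∉ M) : twist P M σ x = σ x := by
  rw [twist_apply hPM, swapPerm_apply_of_not_mem]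
  · simp only [Finset.mem_sdiff, not_and]; intro h; exact absurd h hx
  · simp only [Finset.mem_sdiff, not_and, mem_preim_iff]
    intro h; exact absurd h hx'

/-- On `σ⁻¹ M \ P` the twist takes values in `σ(P)`. -/
lemma twist_apply_mem (hPM : P.card = M.card) {x : V}
    (hx : x ∉ P) (hx' : σ x ∈ M) : twist P M σ x ∈ P.image σ := by
  rw [twist_apply hPM]
  have hmem : x ∈ (M.image σ.symm) \ P := Finset.mem_sdiff.mpr ⟨mem_preim_iff.mpr hx', hx⟩
  have := swapPerm_mem_of_mem_right disjoint_sdiff_sdiff (twist_cardcond hPM) hmem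
  exact Finset.mem_image_of_mem _ (Finset.mem_sdiff.mp this).1

/-- Twisting back recovers `σ`. -/
lemma twist_twist (hPM : P.card = M.card)
    (hσ : P.image σ = N) : twist P N (twist P M σ) = σ := by
  set τ := twist P M σ with hτ
  set Q := M.image σ.symm with hQ
  have hcc := twist_cardcond (σ := σ) hPM
  set π := swapPerm (P \ Q) (Q \ P) disjoint_sdiff_sdiff hcc with hπ
  have hτx : ∀ x, τ x = σ (π x) := fun x => twist_apply hPM x
  have hτeq : τ = π.trans σ := by
    ext x; exact hτx x
  -- the preimage of N under τ is Q
  have hpre : N.image τ.symm = Q := by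
    have h1 : N.image τ.symm = (N.image σ.symm).image π.symm := by
      rw [Finset.image_image]
      apply Finset.image_congr
      intro b _
      simp only [Function.comp_apply, hτeq, Equiv.symm_trans_apply]
    have h2 : N.image σ.symm = P := by
      rw [← hσ, Finset.image_image]
      have : ⇑σ.symm ∘ ⇑σ = id := by ext v; simp
      rw [this, Finset.image_id]
    rw [h1, h2, hπ, swapPerm_symm, ← hπ]
    exact swapPerm_image P Q hcc
  -- now unfold the outer twist
  have hcc2 : (P \ N.image τ.symm).card = ((N.image τ.symm) \ P).card := by
    rw [hpre]; exact hcc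
  ext x
  rw [twist, dif_pos hcc2]
  have hswap :
      swapPerm (P \ N.image τ.symm) ((N.image τ.symm) \ P) disjoint_sdiff_sdiff hcc2
        = π := by
    rw [hπ]
    congr 1 <;> rw [hpre]
  simp only [Equiv.trans_apply, hswap, hτx]
  have : π (π x) = x := by
    rw [hπ]
    exact swapFun_involutive _ _ disjoint_sdiff_sdiff _ x
  rw [this]

end Twist


section Twist
variable {V β : Type*} [Fintype V] [Fintype β] [DecidableEq V] [DecidableEq β]
variable {P : Finset V} {M N : Finset β} {σ : V ≃ β}


/-- If the event `(P', N')` is "independent" of `(P, N)` (disjoint positions, disjoint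
images) and `σ` does not realize it, then neither does any twist of `σ` at `(P, ·)`. -/
lemma twist_avoid (hPM : P.card = M.card) (hσ : P.image ⇑σ = N)
    {P' : Finset V} {N' : Finset β} (hPP : Disjoint P P') (hNN : Disjoint N N')
    (hav : P'.image ⇑σ ≠ N') : P'.image ⇑(twist P M σ) ≠ N' := by
  intro hcon
  by_cases hmix : ∃ x ∈ P', σ x ∈ M ∧ x ∉ P
  · obtain ⟨x, hxP', hxM, hxP⟩ := hmix
    have h1 : twist P M σ x ∈ N := by
      rw [← hσ]; exact twist_apply_mem hPM hxP hxM
    have h2 : twist P M σ x ∈ N' := by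
      rw [← hcon]; exact Finset.mem_image_of_mem _ hxP'
    exact (Finset.disjoint_left.mp hNN h1) h2
  · push_neg at hmix
    apply hav
    rw [← hcon]
    apply Finset.image_congr
    intro x hx
    have hxP : x ∉ P := Finset.disjoint_right.mp hPP hx
    exact (twist_apply_of_not_mem hPM hxP (fun hc => absurd (hmix x hx hc) hxP)).symm

/-- Core counting lemma: within any "twist-closed" set `B` of bijections, the fiber
where `P` maps onto `N` occupies at most a `1 / (n choose r)` fraction. -/
lemma fiber_count (r : ℕ) (B : Finset (V ≃ β)) (P : Finset V) (N : Finset β)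
    (hP : P.card = r) (hNr : N.card = r)
    (hB : ∀ σ : V ≃ β, σ ∈ B → P.image ⇑σ = N → ∀ M ∈ powersetCard r (univ : Finset β),
      twist P M σ ∈ B) :
    (B.filter fun σ : V ≃ β => P.image ⇑σ = N).card * (Fintype.card β).choose r ≤ B.card := by
  classical
  have hmaps : ∀ σ : V ≃ β, σ ∈ B → P.image ⇑σ ∈ powersetCard r (univ : Finset β) := by
    intro σ _
    rw [Finset.mem_powersetCard]
    exact ⟨Finset.subset_univ _, by rw [Finset.card_image_of_injective _ σ.injective, hP]⟩
  have hsum : B.card = ∑ M ∈ powersetCard r (univ : Finset β),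
      (B.filter fun σ : V ≃ β => P.image ⇑σ = M).card :=
    Finset.card_eq_sum_card_fiberwise hmaps
  have hfib : ∀ M ∈ powersetCard r (univ : Finset β),
      (B.filter fun σ : V ≃ β => P.image ⇑σ = N).card ≤ (B.filter fun σ : V ≃ β => P.image ⇑σ = M).card := by
    intro M hM
    have hMr : M.card = r := (Finset.mem_powersetCard.mp hM).2
    apply Finset.card_le_card_of_injOn (fun σ => twist P M σ)
    · intro σ hσ
      rw [Finset.mem_coe, Finset.mem_filter] at hσ ⊢
      exact ⟨hB σ hσ.1 hσ.2 M hM, twist_image (hP.trans hMr.symm)⟩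
    · intro σ₁ h₁ σ₂ h₂ heq
      simp only [coe_filter, Set.mem_setOf_eq] at h₁ h₂
      have e₁ : twist P N (twist P M σ₁) = σ₁ := twist_twist (hP.trans hMr.symm) h₁.2
      have e₂ : twist P N (twist P M σ₂) = σ₂ := twist_twist (hP.trans hMr.symm) h₂.2
      have heq' : twist P M σ₁ = twist P M σ₂ := heq
      rw [← e₁, ← e₂, heq']
  calc (B.filter fun σ : V ≃ β => P.image ⇑σ = N).card * (Fintype.card β).choose r
      = ∑ _M ∈ powersetCard r (univ : Finset β),
          (B.filter fun σ : V ≃ β => P.image ⇑σ = N).card := by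
        rw [Finset.sum_const, Finset.card_powersetCard, Finset.card_univ, smul_eq_mul,
          mul_comm]
    _ ≤ ∑ M ∈ powersetCard r (univ : Finset β),
          (B.filter fun σ : V ≃ β => P.image ⇑σ = M).card := Finset.sum_le_sum hfib
    _ = B.card := hsum.symm

end Twist


section Helpers
variable {β : Type*} [Fintype β] [DecidableEq β]

/-- Number of `r`-subsets of a finite type containing a fixed vertex. -/
lemma card_powersetCard_filter_mem (r : ℕ) (hr : 1 ≤ r) (v : β) :
    ((powersetCard r (univ : Finset β)).filter fun F => v ∈ F).card
      = (Fintype.card β - 1).choose (r - 1) := by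
  classical
  have key : ((powersetCard r (univ : Finset β)).filter fun F => v ∈ F).card
      = (powersetCard (r-1) ((univ : Finset β).erase v)).card := by
    refine Finset.card_bij' (fun F _ => F.erase v) (fun G _ => insert v G) ?hi ?hj ?li ?ri
    case hi =>
      intro F hF
      rw [Finset.mem_filter, Finset.mem_powersetCard] at hF
      rw [Finset.mem_powersetCard]
      constructor
      · intro z hz
        rw [Finset.mem_erase] at hz ⊢
        exact ⟨hz.1, Finset.mem_univ _⟩
      · rw [Finset.card_erase_of_mem hF.2, hF.1.2]
    case hj =>
      intro G hG
      rw [Finset.mem_powersetCard] at hG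
      rw [Finset.mem_filter, Finset.mem_powersetCard]
      have hvG : v ∉ G := fun h => by
        have := hG.1 h
        rw [Finset.mem_erase] at this
        exact this.1 rfl
      refine ⟨⟨Finset.subset_univ _, ?_⟩, Finset.mem_insert_self _ _⟩
      rw [Finset.card_insert_of_notMem hvG, hG.2]
      omega
    case li =>
      intro F hF
      rw [Finset.mem_filter] at hF
      exact Finset.insert_erase hF.2
    case ri =>
      intro G hG
      rw [Finset.mem_powersetCard] at hG
      have hvG : v ∉ G := fun h => by
        have := hG.1 h
        rw [Finset.mem_erase] at this
        exact this.1 rfl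
      exact Finset.erase_insert hvG
  rw [key, Finset.card_powersetCard, Finset.card_erase_of_mem (Finset.mem_univ v),
    Finset.card_univ]

/-- Double counting: `r` times the number of `r`-sets in a family equals the sum of
vertex degrees of the family. -/
lemma card_mul_eq_sum_degrees (r : ℕ) (𝒩 : Finset (Finset β)) (h : ∀ N ∈ 𝒩, N.card = r) :
    𝒩.card * r = ∑ v : β, (𝒩.filter fun N => v ∈ N).card := by
  classical
  have h1 : ∀ N ∈ 𝒩, N.card = ∑ v : β, if v ∈ N then 1 else 0 := by
    intro N _
    rw [← Finset.card_filter]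
    congr 1
    ext z; simp
  calc 𝒩.card * r = ∑ N ∈ 𝒩, N.card := by
        rw [Finset.sum_congr rfl h, Finset.sum_const, smul_eq_mul]
    _ = ∑ N ∈ 𝒩, ∑ v : β, if v ∈ N then 1 else 0 := Finset.sum_congr rfl h1
    _ = ∑ v : β, ∑ N ∈ 𝒩, if v ∈ N then 1 else 0 := Finset.sum_comm
    _ = ∑ v : β, (𝒩.filter fun N => v ∈ N).card := by
        apply Finset.sum_congr rfl
        intro v _
        rw [Finset.card_filter]

end Helpers

section Glue
variable {α β : Type*} [Fintype α] [Fintype β] [DecidableEq α] [DecidableEq β]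

/-- Build a perfect packing from a global bijection all of whose blocks embed edges. -/
lemma packing_of_equiv {q : ℕ} (E_G : Finset (Finset α)) (E_H : Finset (Finset β))
    (σ : (Fin q × α) ≃ β)
    (hedge : ∀ (t : Fin q) (F : Finset α), F ∈ E_G →
      F.image (fun a => σ (t, a)) ∈ E_H) :
    HasPerfectPacking E_G E_H := by
  have hinj : ∀ t : Fin q, Function.Injective (fun a => σ (t, a)) := by
    intro t a a' h
    have := σ.injective h
    exact ((Prod.mk.injEq _ _ _ _).mp this).2
  refine ⟨q, fun t => ⟨fun a => σ (t, a), hinj t⟩, ?_, ?_, ?_⟩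
  · intro t t' hne a a' h
    have := σ.injective h
    exact hne ((Prod.mk.injEq _ _ _ _).mp this).1
  · intro b
    exact ⟨(σ.symm b).1, (σ.symm b).2, by simp⟩
  · intro t F hF
    rw [show F.map ⟨fun a => σ (t, a), hinj t⟩ = F.image (fun a => σ (t, a)) from
      Finset.map_eq_image _ F]
    exact hedge t F hF
end Glue


section PackSetup
variable {α β : Type*} [Fintype α] [Fintype β] [DecidableEq α] [DecidableEq β]

/-- Index type for the bad events: a block, an edge of `G`, and a non-edge of `H`. -/
abbrev PIdx (q : ℕ) (E_G : Finset (Finset α)) (NE : Finset (Finset β)) : Type _ :=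
  Fin q × {F : Finset α // F ∈ E_G} × {N : Finset β // N ∈ NE}

variable {q : ℕ} {E_G : Finset (Finset α)} {NE : Finset (Finset β)}

/-- The position set of an event: the copy of its edge inside block `i.1`. -/
def pPos (i : PIdx q E_G NE) : Finset (Fin q × α) :=
  (i.2.1 : Finset α).map ⟨fun a => (i.1, a), fun a a' h => ((Prod.mk.injEq _ _ _ _).mp h).2⟩

/-- The bad event: the positions of the edge land exactly on the non-edge. -/
def pEvent (i : PIdx q E_G NE) : Finset ((Fin q × α) ≃ β) :=
  univ.filter (fun σ => (pPos i).image ⇑σ = (i.2.2 : Finset β))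

/-- Dependency neighbourhoods. -/
def pNbhd (i : PIdx q E_G NE) : Finset (PIdx q E_G NE) :=
  univ.filter (fun j =>
    (i.1 = j.1 ∧ ¬Disjoint (i.2.1 : Finset α) (j.2.1 : Finset α))
      ∨ ¬Disjoint (i.2.2 : Finset β) (j.2.2 : Finset β))

lemma pPos_card (i : PIdx q E_G NE) : (pPos i).card = (i.2.1 : Finset α).card :=
  Finset.card_map _

lemma pPos_disjoint (i j : PIdx q E_G NE) (hj : j ∉ pNbhd i) :
    Disjoint (pPos i) (pPos j) ∧ Disjoint (i.2.2 : Finset β) (j.2.2 : Finset β) := by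
  simp only [pNbhd, Finset.mem_filter, Finset.mem_univ, true_and, not_or, not_and_or,
    not_not] at hj
  obtain ⟨h1, h2⟩ := hj
  refine ⟨Finset.disjoint_left.mpr ?_, h2⟩
  rintro ⟨t, a⟩ hmem hmem'
  simp only [pPos, Finset.mem_map, Function.Embedding.coeFn_mk] at hmem hmem'
  obtain ⟨a1, ha1, he1⟩ := hmem
  obtain ⟨a2, ha2, he2⟩ := hmem'
  have hti : i.1 = t := congrArg Prod.fst he1
  have htj : j.1 = t := congrArg Prod.fst he2
  have hai : a1 = a := congrArg Prod.snd he1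
  have haj : a2 = a := congrArg Prod.snd he2
  rcases h1 with hne | hdis
  · exact hne (hti.trans htj.symm)
  · exact Finset.disjoint_left.mp hdis (hai ▸ ha1) (haj ▸ ha2)

end PackSetup

/-- A sufficient minimum-degree condition for a perfect `G`-packing: if `G` is an
`r`-uniform hypergraph with `s` vertices and `m` edges, each edge intersecting at most
`d` other edges, `H` is an `r`-uniform hypergraph with `n` vertices where `s ∣ n`, every
vertex of `H` has degree at least `(1 - x) * C(n-1, r-1)`, and
`x < 1 / (e * (d + 1 + r² * m / s))`, then `H` has a perfect `G`-packing. -/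
theorem perfect_packing_of_min_degree {α β : Type*} [Fintype α] [Fintype β]
    [DecidableEq α] [DecidableEq β] (r s n m d : ℕ) (x : ℝ)
    (E_G : Finset (Finset α)) (E_H : Finset (Finset β))
    (hGr : ∀ F ∈ E_G, F.card = r) (hHr : ∀ F ∈ E_H, F.card = r)
    (hs : Fintype.card α = s) (hn : Fintype.card β = n) (hsn : s ∣ n)
    (hm : E_G.card = m)
    (hd : ∀ F ∈ E_G, (E_G.filter fun F' => F' ≠ F ∧ (F ∩ F').Nonempty).card ≤ d)
    (hdeg : ∀ v : β,
      (1 - x) * ((n - 1).choose (r - 1) : ℝ) ≤ ((E_H.filter fun F => v ∈ F).card : ℝ))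
    (hx : x < 1 / (Real.exp 1 * ((d : ℝ) + 1 + (r : ℝ) ^ 2 * (m : ℝ) / (s : ℝ)))) :
    HasPerfectPacking E_G E_H := by
  classical
  have he2 : (2:ℝ) < Real.exp 1 := lt_trans (by norm_num) Real.exp_one_gt_d9
  -- trivial case : no vertices in H
  rcases isEmpty_or_nonempty β with hβe | hβne
  · exact ⟨0, fun t => t.elim0, fun t => t.elim0,
      fun b => (hβe.false b).elim, fun t => t.elim0⟩
  have hn1 : 1 ≤ n := by rw [← hn]; exact Fintype.card_pos
  have hs1 : 1 ≤ s := by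
    rcases Nat.eq_zero_or_pos s with h0 | h; · rw [h0] at hsn; omega
    exact h
  set q : ℕ := n / s with hqdef
  have hq : q * s = n := Nat.div_mul_cancel hsn
  have hq1 : 1 ≤ q := by
    rcases Nat.eq_zero_or_pos q with h0 | h; · rw [h0] at hq; omega
    exact h
  have hV : Fintype.card (Fin q × α) = Fintype.card β := by
    rw [Fintype.card_prod, Fintype.card_fin, hs, hn, hq]
  have hΩne : Nonempty ((Fin q × α) ≃ β) := ⟨Fintype.equivOfCardEq hV⟩
  -- trivial case : G has no edges
  rcases eq_or_ne E_G ∅ with hGe | hGne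
  · exact packing_of_equiv E_G E_H (Fintype.equivOfCardEq hV)
      (fun t F hF => by rw [hGe] at hF; exact absurd hF (notMem_empty _))
  obtain ⟨F₀, hF₀⟩ := Finset.nonempty_iff_ne_empty.mpr hGne
  -- degenerate case : r = 0 is contradictory
  rcases Nat.eq_zero_or_pos r with hr0 | hr1
  · exfalso
    obtain ⟨v⟩ := hβne
    have hfil : E_H.filter (fun F => v ∈ F) = ∅ := by
      apply Finset.filter_eq_empty_iff.mpr
      intro F hF
      have : F = ∅ := Finset.card_eq_zero.mp (by rw [hHr F hF, hr0])
      rw [this]; exact notMem_empty v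
    have hdv := hdeg v
    rw [hfil, hr0] at hdv
    norm_num at hdv
    rw [hr0] at hx
    push_cast at hx
    have hd0 : (0:ℝ) ≤ (d:ℝ) := Nat.cast_nonneg d
    have hzz : ((0:ℝ))^2 * (m:ℝ) / (s:ℝ) = 0 := by norm_num
    rw [hzz] at hx
    have hlt : (1:ℝ) / (Real.exp 1 * ((d:ℝ) + 1 + 0)) < 1 := by
      rw [div_lt_one (by positivity)]
      nlinarith
    linarith
  -- now 1 ≤ r ≤ s ≤ n
  have hrs : r ≤ s := by
    rw [← hGr F₀ hF₀, ← hs, ← Finset.card_univ]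
    exact Finset.card_le_card (Finset.subset_univ F₀)
  have hsn' : s ≤ n := Nat.le_of_dvd (by omega) hsn
  have hrn : r ≤ n := le_trans hrs hsn'
  have hC : 0 < n.choose r := Nat.choose_pos hrn
  have hCR : (0:ℝ) < (n.choose r : ℝ) := by exact_mod_cast hC
  set C' : ℝ := ((n - 1).choose (r - 1) : ℝ) with hC'def
  -- the binomial identity r * C(n,r) = n * C(n-1,r-1)
  have hID : (r : ℝ) * (n.choose r : ℝ) = (n : ℝ) * C' := by
    have hh := Nat.add_one_mul_choose_eq (n-1) (r-1)
    have h1 : n - 1 + 1 = n := by omega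
    have h2 : r - 1 + 1 = r := by omega
    rw [h1, h2] at hh
    have hhR : (n:ℝ) * (((n-1).choose (r-1) : ℕ) : ℝ) = (n.choose r : ℝ) * (r:ℝ) := by
      exact_mod_cast hh
    rw [hC'def]
    linarith
  -- non-edges
  set NE : Finset (Finset β) := (powersetCard r (univ : Finset β)) \ E_H with hNEdef
  have hEHsub : E_H ⊆ powersetCard r (univ : Finset β) := by
    intro F hF
    rw [Finset.mem_powersetCard]
    exact ⟨Finset.subset_univ _, hHr F hF⟩
  have hNEr : ∀ N ∈ NE, N.card = r := by
    intro N hN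
    exact (Finset.mem_powersetCard.mp (Finset.mem_sdiff.mp hN).1).2
  -- degree bound for non-edges at every vertex
  have hdegv : ∀ v : β, ((NE.filter fun N => v ∈ N).card : ℝ) ≤ x * C' := by
    intro v
    have hsplit : NE.filter (fun N => v ∈ N)
        = ((powersetCard r (univ : Finset β)).filter fun N => v ∈ N)
          \ (E_H.filter fun N => v ∈ N) := by
      ext N
      simp only [hNEdef, Finset.mem_filter, Finset.mem_sdiff]
      tauto
    have hsub : E_H.filter (fun N => v ∈ N)
        ⊆ (powersetCard r (univ : Finset β)).filter fun N => v ∈ N :=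
      Finset.filter_subset_filter _ hEHsub
    rw [hsplit, Finset.card_sdiff_of_subset hsub, Nat.cast_sub (Finset.card_le_card hsub),
      card_powersetCard_filter_mem r hr1 v, hn]
    have := hdeg v
    rw [hC'def]
    linarith
  -- global bound on the number of non-edges
  have hNEcard : (NE.card : ℝ) ≤ x * (n.choose r : ℝ) := by
    have hcnt := card_mul_eq_sum_degrees r NE hNEr
    have hcntR : ((NE.card : ℕ) : ℝ) * r = ∑ v : β, ((NE.filter fun N => v ∈ N).card : ℝ) := by
      exact_mod_cast hcnt
    have hsum : ∑ v : β, ((NE.filter fun N => v ∈ N).card : ℝ) ≤ (n:ℝ) * (x * C') := by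
      calc ∑ v : β, ((NE.filter fun N => v ∈ N).card : ℝ)
          ≤ ∑ _v : β, x * C' := Finset.sum_le_sum (fun v _ => hdegv v)
        _ = (n:ℝ) * (x * C') := by
            rw [Finset.sum_const, Finset.card_univ, hn, nsmul_eq_mul]
    have hrR : (0:ℝ) < (r:ℝ) := by exact_mod_cast hr1
    have hfin : (NE.card : ℝ) * r ≤ x * ((n.choose r : ℝ)) * r := by
      calc (NE.card : ℝ) * r ≤ (n:ℝ) * (x * C') := by rw [hcntR]; exact hsum
        _ = x * ((n:ℝ) * C') := by ring
        _ = x * ((r:ℝ) * (n.choose r:ℝ)) := by rw [← hID]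
        _ = x * ((n.choose r : ℝ)) * r := by ring
    exact le_of_mul_le_mul_right hfin hrR
  -- ===================== the local lemma setup =====================
  set D₀ : ℝ := (d:ℝ) + 1 + (r:ℝ)^2 * m / s with hD₀def
  have hsR : (0:ℝ) < (s:ℝ) := by exact_mod_cast hs1
  have hnR : (0:ℝ) < (n:ℝ) := by exact_mod_cast hn1
  have hD₀pos : 0 < D₀ := by rw [hD₀def]; positivity
  have hself : ∀ i : PIdx q E_G NE, i ∈ pNbhd i := by
    intro i
    refine Finset.mem_filter.mpr ⟨Finset.mem_univ _, Or.inr ?_⟩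
    intro hcon
    have hemp : (i.2.2 : Finset β) = ∅ := by
      simpa using disjoint_self.mp hcon
    have hcc := hNEr _ i.2.2.2
    rw [hemp] at hcc
    simp only [Finset.card_empty] at hcc
    omega
  -- neighbourhood size bound
  have hΓcard : ∀ i : PIdx q E_G NE,
      ((pNbhd i).card : ℝ) ≤ x * (n.choose r : ℝ) * D₀ := by
    intro i
    have hsplit : pNbhd i
        = (univ.filter fun j : PIdx q E_G NE =>
            i.1 = j.1 ∧ ¬Disjoint (i.2.1 : Finset α) (j.2.1 : Finset α))
          ∪ (univ.filter fun j : PIdx q E_G NE =>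
            ¬Disjoint (i.2.2 : Finset β) (j.2.2 : Finset β)) :=
      Finset.filter_or _ _ _
    -- part A : same block, intersecting edge
    have hA : (univ.filter fun j : PIdx q E_G NE =>
        i.1 = j.1 ∧ ¬Disjoint (i.2.1 : Finset α) (j.2.1 : Finset α)).card
          ≤ (d + 1) * NE.card := by
      have hmapsA := Finset.card_le_card_of_injOn
        (s := univ.filter fun j : PIdx q E_G NE =>
          i.1 = j.1 ∧ ¬Disjoint (i.2.1 : Finset α) (j.2.1 : Finset α))
        (fun j : PIdx q E_G NE => ((j.2.1 : Finset α), (j.2.2 : Finset β)))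
        (t := (E_G.filter fun F' => ¬Disjoint (i.2.1 : Finset α) F') ×ˢ NE)
        (fun j hj => by
          rw [Finset.mem_coe, Finset.mem_filter] at hj
          exact Finset.mem_product.mpr
            ⟨Finset.mem_filter.mpr ⟨j.2.1.2, hj.2.2⟩, j.2.2.2⟩)
        (by
          rintro ⟨t1, F1, N1⟩ h1 ⟨t2, F2, N2⟩ h2 heq
          simp only [Finset.coe_filter, Set.mem_setOf_eq] at h1 h2
          simp only [Prod.mk.injEq] at heq
          have hF : F1 = F2 := Subtype.ext heq.1
          have hN : N1 = N2 := Subtype.ext heq.2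
          have ht : t1 = t2 := h1.2.1.symm.trans h2.2.1
          rw [hF, hN, ht])
      rw [Finset.card_product] at hmapsA
      have hflt : (E_G.filter fun F' => ¬Disjoint (i.2.1 : Finset α) F').card ≤ d + 1 := by
        have hsub : E_G.filter (fun F' => ¬Disjoint (i.2.1 : Finset α) F')
            ⊆ insert (i.2.1 : Finset α)
              (E_G.filter fun F' => F' ≠ (i.2.1 : Finset α)
                ∧ ((i.2.1 : Finset α) ∩ F').Nonempty) := by
          intro z hz
          rw [Finset.mem_filter] at hz
          by_cases hzF : z = (i.2.1 : Finset α)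
          · rw [hzF]; exact Finset.mem_insert_self _ _
          · exact Finset.mem_insert_of_mem (Finset.mem_filter.mpr
              ⟨hz.1, hzF, Finset.not_disjoint_iff_nonempty_inter.mp hz.2⟩)
        calc (E_G.filter fun F' => ¬Disjoint (i.2.1 : Finset α) F').card
            ≤ _ := Finset.card_le_card hsub
          _ ≤ _ + 1 := Finset.card_insert_le _ _
          _ ≤ d + 1 := by have := hd (i.2.1 : Finset α) i.2.1.2; omega
      calc (univ.filter fun j : PIdx q E_G NE =>
          i.1 = j.1 ∧ ¬Disjoint (i.2.1 : Finset α) (j.2.1 : Finset α)).card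
          ≤ (E_G.filter fun F' => ¬Disjoint (i.2.1 : Finset α) F').card * NE.card := hmapsA
        _ ≤ (d + 1) * NE.card := Nat.mul_le_mul_right _ hflt
    -- part B : intersecting non-edge
    have hB : (univ.filter fun j : PIdx q E_G NE =>
        ¬Disjoint (i.2.2 : Finset β) (j.2.2 : Finset β)).card
          ≤ q * (m * (NE.filter fun N' => ¬Disjoint (i.2.2 : Finset β) N').card) := by
      have hmapsB := Finset.card_le_card_of_injOn
        (s := univ.filter fun j : PIdx q E_G NE =>
          ¬Disjoint (i.2.2 : Finset β) (j.2.2 : Finset β))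
        (fun j : PIdx q E_G NE => (j.1, ((j.2.1 : Finset α), (j.2.2 : Finset β))))
        (t := (univ : Finset (Fin q)) ×ˢ
          (E_G ×ˢ (NE.filter fun N' => ¬Disjoint (i.2.2 : Finset β) N')))
        (fun j hj => by
          rw [Finset.mem_coe, Finset.mem_filter] at hj
          exact Finset.mem_product.mpr ⟨Finset.mem_univ _,
            Finset.mem_product.mpr ⟨j.2.1.2, Finset.mem_filter.mpr ⟨j.2.2.2, hj.2⟩⟩⟩)
        (by
          rintro ⟨t1, F1, N1⟩ _ ⟨t2, F2, N2⟩ _ heq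
          simp only [Prod.mk.injEq] at heq
          have hF : F1 = F2 := Subtype.ext heq.2.1
          have hN : N1 = N2 := Subtype.ext heq.2.2
          rw [hF, hN, heq.1])
      rw [Finset.card_product, Finset.card_product, Finset.card_univ, Fintype.card_fin,
        hm] at hmapsB
      exact hmapsB
    have hmeet : ((NE.filter fun N' => ¬Disjoint (i.2.2 : Finset β) N').card : ℝ)
        ≤ (r:ℝ) * (x * C') := by
      have hsub : NE.filter (fun N' => ¬Disjoint (i.2.2 : Finset β) N')
          ⊆ (i.2.2 : Finset β).biUnion (fun v => NE.filter fun N' => v ∈ N') := by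
        intro z hz
        rw [Finset.mem_filter] at hz
        obtain ⟨v, hv⟩ := Finset.not_disjoint_iff_nonempty_inter.mp hz.2
        rw [Finset.mem_inter] at hv
        exact Finset.mem_biUnion.mpr ⟨v, hv.1, Finset.mem_filter.mpr ⟨hz.1, hv.2⟩⟩
      have h1 : (NE.filter fun N' => ¬Disjoint (i.2.2 : Finset β) N').card
          ≤ ∑ v ∈ (i.2.2 : Finset β), (NE.filter fun N' => v ∈ N').card :=
        le_trans (Finset.card_le_card hsub) Finset.card_biUnion_le
      calc ((NE.filter fun N' => ¬Disjoint (i.2.2 : Finset β) N').card : ℝ)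
          ≤ ∑ v ∈ (i.2.2 : Finset β), ((NE.filter fun N' => v ∈ N').card : ℝ) := by
            exact_mod_cast h1
        _ ≤ ∑ _v ∈ (i.2.2 : Finset β), x * C' := Finset.sum_le_sum (fun v _ => hdegv v)
        _ = ((i.2.2 : Finset β).card : ℝ) * (x * C') := by
            rw [Finset.sum_const, nsmul_eq_mul]
        _ = (r:ℝ) * (x * C') := by rw [hNEr _ i.2.2.2]
    -- algebra : q * m * r * C' = r^2 m C(n,r) / s
    have hnqs : ((n:ℕ):ℝ) = (q:ℝ) * (s:ℝ) := by exact_mod_cast hq.symm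
    have hkeyalg : (q:ℝ) * ((m:ℝ) * ((r:ℝ) * C'))
        = (n.choose r : ℝ) * ((r:ℝ)^2 * (m:ℝ)) / (s:ℝ) := by
      rw [eq_div_iff (ne_of_gt hsR)]
      linear_combination ((m:ℝ) * (r:ℝ) * C') * hnqs.symm - ((m:ℝ) * (r:ℝ)) * hID
    -- combine
    have hcard_union : ((pNbhd i).card : ℝ)
        ≤ ((univ.filter fun j : PIdx q E_G NE =>
            i.1 = j.1 ∧ ¬Disjoint (i.2.1 : Finset α) (j.2.1 : Finset α)).card : ℝ)
          + ((univ.filter fun j : PIdx q E_G NE =>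
            ¬Disjoint (i.2.2 : Finset β) (j.2.2 : Finset β)).card : ℝ) := by
      rw [hsplit]
      exact_mod_cast Finset.card_union_le _ _
    have hAR : ((univ.filter fun j : PIdx q E_G NE =>
        i.1 = j.1 ∧ ¬Disjoint (i.2.1 : Finset α) (j.2.1 : Finset α)).card : ℝ)
          ≤ ((d:ℝ) + 1) * NE.card := by
      calc _ ≤ (((d + 1) * NE.card : ℕ) : ℝ) := by exact_mod_cast hA
        _ = ((d:ℝ) + 1) * NE.card := by push_cast; ring
    have hBR : ((univ.filter fun j : PIdx q E_G NE =>
        ¬Disjoint (i.2.2 : Finset β) (j.2.2 : Finset β)).card : ℝ)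
          ≤ (q:ℝ) * ((m:ℝ) * ((r:ℝ) * (x * C'))) := by
      calc _ ≤ ((q * (m * (NE.filter fun N' =>
            ¬Disjoint (i.2.2 : Finset β) N').card) : ℕ) : ℝ) := by exact_mod_cast hB
        _ = (q:ℝ) * ((m:ℝ) * ((NE.filter fun N' =>
            ¬Disjoint (i.2.2 : Finset β) N').card : ℝ)) := by push_cast; ring
        _ ≤ (q:ℝ) * ((m:ℝ) * ((r:ℝ) * (x * C'))) := by
            apply mul_le_mul_of_nonneg_left _ (by positivity)
            apply mul_le_mul_of_nonneg_left hmeet (by positivity)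
    have hNER : ((d:ℝ) + 1) * NE.card ≤ ((d:ℝ) + 1) * (x * (n.choose r : ℝ)) := by
      apply mul_le_mul_of_nonneg_left hNEcard (by positivity)
    have hBR2 : (q:ℝ) * ((m:ℝ) * ((r:ℝ) * (x * C')))
        = x * ((n.choose r : ℝ) * ((r:ℝ)^2 * (m:ℝ)) / (s:ℝ)) := by
      rw [← hkeyalg]; ring
    rw [hD₀def]
    have : ((pNbhd i).card : ℝ)
        ≤ ((d:ℝ) + 1) * (x * (n.choose r : ℝ))
          + x * ((n.choose r : ℝ) * ((r:ℝ)^2 * (m:ℝ)) / (s:ℝ)) := by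
      linarith [hcard_union, hAR, hBR, hNER, hBR2.le, hBR2.ge]
    calc ((pNbhd i).card : ℝ) ≤ _ := this
      _ = x * (n.choose r : ℝ) * ((d:ℝ) + 1 + (r:ℝ)^2 * m / s) := by
          field_simp
  -- Δ and the LLL numerical condition
  set Δ : ℕ := (univ : Finset (PIdx q E_G NE)).sup (fun i => (pNbhd i).card) with hΔdef
  have hΔ : ∀ i : PIdx q E_G NE, (pNbhd i).card ≤ Δ := by
    intro i
    rw [hΔdef]
    exact Finset.le_sup (f := fun i : PIdx q E_G NE => (pNbhd i).card) (Finset.mem_univ i)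
  set p : ℝ := ((n.choose r : ℝ))⁻¹ with hpdef
  have hp0 : 0 ≤ p := by rw [hpdef]; positivity
  have hexD : x * (Real.exp 1 * D₀) < 1 := by
    rw [← lt_div_iff₀ (by positivity)]
    exact hx
  have hep : Real.exp 1 * (p * (Δ:ℝ)) ≤ 1 := by
    rcases isEmpty_or_nonempty (PIdx q E_G NE) with hIe | hIne
    · have huniv : (univ : Finset (PIdx q E_G NE)) = ∅ := Finset.univ_eq_empty
      have hΔ0 : Δ = 0 := by rw [hΔdef, huniv]; simp
      rw [hΔ0]
      norm_num
    · obtain ⟨i₀, _, hsup⟩ := Finset.exists_mem_eq_sup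
        (univ : Finset (PIdx q E_G NE)) Finset.univ_nonempty (fun i => (pNbhd i).card)
      have h1 : ((Δ:ℕ):ℝ) ≤ x * (n.choose r:ℝ) * D₀ := by
        rw [hΔdef, hsup]; exact hΓcard i₀
      have hcalc : Real.exp 1 * (p * (Δ:ℝ)) ≤ Real.exp 1 * (p * (x * (n.choose r:ℝ) * D₀)) := by
        apply mul_le_mul_of_nonneg_left _ (Real.exp_pos 1).le
        exact mul_le_mul_of_nonneg_left h1 hp0
      have heq2 : Real.exp 1 * (p * (x * (n.choose r:ℝ) * D₀)) = x * (Real.exp 1 * D₀) := by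
        rw [hpdef]
        field_simp
        try ring
      linarith
  -- the correlation hypothesis via the twist argument
  have hcorr : ∀ (i : PIdx q E_G NE) (S : Finset (PIdx q E_G NE)),
      (∀ j ∈ S, j ∉ pNbhd i) →
      ((avoidSet pEvent S ∩ pEvent i).card : ℝ) ≤ p * (avoidSet pEvent S).card := by
    intro i S hS
    have hint : avoidSet pEvent S ∩ pEvent i
        = (avoidSet pEvent S).filter
            (fun σ : (Fin q × α) ≃ β => (pPos i).image ⇑σ = (i.2.2 : Finset β)) := by
      ext σ
      simp only [pEvent, Finset.mem_inter, Finset.mem_filter, Finset.mem_univ, true_and]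
    have hPr : (pPos i).card = r := by rw [pPos_card]; exact hGr _ i.2.1.2
    have hclosed : ∀ σ : (Fin q × α) ≃ β, σ ∈ avoidSet pEvent S →
        (pPos i).image ⇑σ = (i.2.2 : Finset β) →
        ∀ M ∈ powersetCard r (univ : Finset β), twist (pPos i) M σ ∈ avoidSet pEvent S := by
      intro σ hσ himg M hM
      simp only [avoidSet, Finset.mem_filter, Finset.mem_univ, true_and] at hσ ⊢
      intro j hj hmemA
      have hdisj := pPos_disjoint i j (hS j hj)
      have hav : (pPos j).image ⇑σ ≠ (j.2.2 : Finset β) := by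
        intro hcon
        exact hσ j hj (Finset.mem_filter.mpr ⟨Finset.mem_univ _, hcon⟩)
      have hPM : (pPos i).card = M.card := by
        rw [hPr, (Finset.mem_powersetCard.mp hM).2]
      have := twist_avoid hPM himg hdisj.1 hdisj.2 hav
      simp only [pEvent, Finset.mem_filter, Finset.mem_univ, true_and] at hmemA
      exact this hmemA
    have hcnt := fiber_count r (avoidSet pEvent S) (pPos i) (i.2.2 : Finset β)
      hPr (hNEr _ i.2.2.2) hclosed
    rw [hn] at hcnt
    have hcR : (((avoidSet pEvent S).filter
        (fun σ : (Fin q × α) ≃ β => (pPos i).image ⇑σ = (i.2.2 : Finset β))).card : ℝ)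
          * (n.choose r : ℝ) ≤ ((avoidSet pEvent S).card : ℝ) := by
      exact_mod_cast hcnt
    rw [hint]
    calc (((avoidSet pEvent S).filter
        (fun σ : (Fin q × α) ≃ β => (pPos i).image ⇑σ = (i.2.2 : Finset β))).card : ℝ)
        = (((avoidSet pEvent S).filter
            (fun σ : (Fin q × α) ≃ β => (pPos i).image ⇑σ = (i.2.2 : Finset β))).card : ℝ)
          * (n.choose r : ℝ) * p := by
          rw [hpdef]
          field_simp
      _ ≤ ((avoidSet pEvent S).card : ℝ) * p := mul_le_mul_of_nonneg_right hcR hp0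
      _ = p * ((avoidSet pEvent S).card : ℝ) := mul_comm _ _
  -- apply the local lemma
  obtain ⟨σ, hσ⟩ := lll_nonempty pEvent pNbhd hself Δ hΔ p hp0 hcorr hep
  apply packing_of_equiv E_G E_H σ
  intro t F hF
  by_contra hnot
  have hinj2 : Function.Injective (fun a => σ (t, a)) := by
    intro a a' h
    have := σ.injective h
    exact ((Prod.mk.injEq _ _ _ _).mp this).2
  have hXcard : (F.image (fun a => σ (t, a))).card = r := by
    rw [Finset.card_image_of_injective _ hinj2]
    exact hGr F hF
  have hXNE : F.image (fun a => σ (t, a)) ∈ NE :=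
    Finset.mem_sdiff.mpr
      ⟨Finset.mem_powersetCard.mpr ⟨Finset.subset_univ _, hXcard⟩, hnot⟩
  have hiA : σ ∈ pEvent ((t, ⟨F, hF⟩, ⟨_, hXNE⟩) : PIdx q E_G NE) := by
    simp only [pEvent, Finset.mem_filter, Finset.mem_univ, true_and]
    rw [pPos]
    rw [Finset.map_eq_image, Finset.image_image]
    rfl
  simp only [avoidSet, Finset.mem_filter] at hσ
  exact hσ.2 _ (Finset.mem_univ _) hiA
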